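/- Let f be a continuous 2π-periodic probability density with G(x) = ∫_x^{x+π} f(y) dy. If G is not identically 1/2, then there exists an open interval on which f > 0 and G ≠ 1/2, and consequently (1/2)^{n-1} < (1/2) ∫_0^{2π} f(x)[G(x)^{n-1} + G(x-π)^{n-1}] dx for every integer n ≥ 3. -/

import Mathlib

open MeasureTheory intervalIntegral Real

/-- If the half-circle integral `G` of a continuous `2π`-periodic density `f` is
not identically `1/2`, then there is an open interval on which `f > 0` and
`G ≠ 1/2`, and consequently the inequality
`(1/2)^(n-1) < (1/2)∫_0^{2π} f(x)[G(x)^(n-1)+G(x-π)^(n-1)]dx`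
is strict for every integer `n ≥ 3`. -/
theorem stmt7 (f : ℝ → ℝ) (hf_cont : Continuous f) (hf_nonneg : ∀ x, 0 ≤ f x)
    (hf_per : Function.Periodic f (2 * π))
    (hf_int : ∫ x in (0:ℝ)..(2 * π), f x = 1)
    (G : ℝ → ℝ) (hG : ∀ x, G x = ∫ y in x..(x + π), f y)
    (hGnot : ¬ ∀ x, G x = 1/2) :
    (∃ a b : ℝ, a < b ∧ ∀ x ∈ Set.Ioo a b, 0 < f x ∧ G x ≠ 1/2) ∧
      ∀ n : ℕ, 3 ≤ n →
        ((1:ℝ)/2) ^ (n-1) <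
          (1/2) * ∫ x in (0:ℝ)..(2 * π), f x * (G x ^ (n-1) + G (x - π) ^ (n-1)) := by
  have hπ : (0:ℝ) < π := pi_pos
  have hint : ∀ a b : ℝ, IntervalIntegrable f volume a b :=
    fun a b => hf_cont.intervalIntegrable a b
  set F : ℝ → ℝ := fun y => ∫ t in (0:ℝ)..y, f t with hF_def
  have hFderiv : ∀ y : ℝ, HasDerivAt F (f y) y :=
    fun y => (hf_cont.integral_hasStrictDerivAt 0 y).hasDerivAt
  have hGF : ∀ x, G x = F (x + π) - F x := by
    intro x
    rw [hG x, eq_sub_iff_add_eq']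
    exact integral_add_adjacent_intervals (hint 0 x) (hint x (x + π))
  have hGderiv : ∀ x, HasDerivAt G (f (x + π) - f x) x := by
    intro x
    have h1 : HasDerivAt (fun y => F (y + π)) (f (x + π)) x := by
      have h := (hFderiv (x + π)).comp x ((hasDerivAt_id x).add_const π)
      rw [mul_one] at h
      exact h
    have h2 := h1.sub (hFderiv x)
    refine HasDerivAt.congr_of_eventuallyEq h2 ?_
    filter_upwards with y using (hGF y)
  have hGcont : Continuous G :=
    continuous_iff_continuousAt.2 fun x => (hGderiv x).continuousAt
  -- G x + G (x - π) = 1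
  have hsum : ∀ x, G x + G (x - π) = 1 := by
    intro x
    have h1 : G (x - π) + G x = ∫ y in (x - π)..(x + π), f y := by
      rw [hG x, hG (x - π)]
      rw [show x - π + π = x by ring]
      exact integral_add_adjacent_intervals (hint (x - π) x) (hint x (x + π))
    have h2 : (∫ y in (x - π)..(x - π + 2 * π), f y) = ∫ y in (0:ℝ)..(0 + 2 * π), f y :=
      hf_per.intervalIntegral_add_eq (x - π) 0
    rw [show x + π = x - π + 2 * π by ring] at h1
    rw [h2, zero_add, hf_int] at h1
    linarith
  have hGnonneg : ∀ x, 0 ≤ G x := by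
    intro x
    rw [hG x]
    exact intervalIntegral.integral_nonneg (by linarith) (fun y _ => hf_nonneg y)
  have hGle1 : ∀ x, G x ≤ 1 := fun x => by linarith [hsum x, hGnonneg (x - π)]
  -- periodicity of G
  have hGper : Function.Periodic G (2 * π) := by
    intro x
    rw [hG (x + 2 * π), hG x]
    have : (∫ y in x..(x + π), f (y + 2 * π)) = ∫ y in (x + 2 * π)..(x + π + 2 * π), f y :=
      (intervalIntegral.integral_comp_add_right f (2 * π)).symm ▸ rfl
    rw [show x + 2 * π + π = x + π + 2 * π by ring]
    rw [← intervalIntegral.integral_comp_add_right f (2 * π)]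
    congr 1
    ext y
    exact hf_per y
  -- key existence of a point
  have hx1 : ∃ x1 : ℝ, 0 < f x1 ∧ G x1 ≠ 1/2 := by
    by_contra hcon
    push_neg at hcon
    have hf0 : ∀ x, G x ≠ 1/2 → f x = 0 := by
      intro x hx
      by_contra hf
      exact absurd (hcon x (lt_of_le_of_ne (hf_nonneg x) (Ne.symm hf))) hx
    -- maximizer of G on [0, 2π]
    obtain ⟨x0, _, hx0max⟩ :=
      (isCompact_Icc : IsCompact (Set.Icc (0:ℝ) (2*π))).exists_isMaxOn (Set.nonempty_Icc.2 (by linarith)) hGcont.continuousOn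
    set M := G x0 with hM_def
    have hMmax : ∀ x, G x ≤ M := by
      intro x
      obtain ⟨y, hy, hxy⟩ := hGper.exists_mem_Ico₀ (by linarith) x
      rw [hxy]
      exact hx0max (Set.mem_Icc.2 ⟨hy.1, hy.2.le⟩)
    have hM : 1/2 < M := by
      push_neg at hGnot
      obtain ⟨x, hx⟩ := hGnot
      rcases lt_or_gt_of_ne hx with h | h
      · have := hsum x
        have : 1/2 < G (x - π) := by linarith
        linarith [hMmax (x - π)]
      · linarith [hMmax x]
    have hGx0π : G (x0 + π) = 1 - M := by
      have := hsum (x0 + π)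
      rw [show x0 + π - π = x0 by ring] at this
      linarith
    -- IVT: exists t in [x0, x0+π] with G t = 1/2
    have hS : ∃ t ∈ Set.Icc x0 (x0 + π), G t = 1/2 := by
      have h12 : (1/2:ℝ) ∈ Set.Icc (G (x0 + π)) (G x0) := by
        rw [hGx0π]; constructor <;> [linarith; linarith]
      have := intermediate_value_Icc' (by linarith : x0 ≤ x0 + π)
        hGcont.continuousOn h12
      obtain ⟨t, ht, htv⟩ := this
      exact ⟨t, ht, htv⟩
    set S := {t | t ∈ Set.Icc x0 (x0 + π) ∧ G t = 1/2} with hS_def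
    have hSne : S.Nonempty := hS
    have hSclosed : IsClosed S := by
      have : S = Set.Icc x0 (x0 + π) ∩ G ⁻¹' {1/2} := by
        ext t; simp [hS_def, Set.mem_inter_iff]
      rw [this]
      exact isClosed_Icc.inter (isClosed_singleton.preimage hGcont)
    have hSbdd : BddBelow S := ⟨x0, fun t ht => ht.1.1⟩
    set b := sInf S with hb_def
    have hbS : b ∈ S := hSclosed.csInf_mem hSne hSbdd
    have hbG : G b = 1/2 := hbS.2
    have hx0b : x0 < b := by
      rcases lt_or_eq_of_le hbS.1.1 with h | h
      · exact h
      · exfalso; rw [← h] at hbG; linarith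
    -- G > 1/2 on Ioo x0 b
    have hGgt : ∀ t ∈ Set.Ioo x0 b, 1/2 < G t := by
      intro t ht
      by_contra hle
      push_neg at hle
      rcases lt_or_eq_of_le hle with h | h
      · -- G t < 1/2, IVT on [x0, t] gives earlier point in S
        have h12 : (1/2:ℝ) ∈ Set.Icc (G t) (G x0) := ⟨h.le, by linarith⟩
        obtain ⟨s, hs, hsv⟩ := intermediate_value_Icc' ht.1.le hGcont.continuousOn h12
        have hsS : s ∈ S := by
          refine ⟨⟨hs.1, ?_⟩, hsv⟩
          have : t ≤ x0 + π := le_trans ht.2.le hbS.1.2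
          linarith [hs.2]
        have := csInf_le hSbdd hsS
        linarith [hs.2, ht.2]
      · have htS : t ∈ S := by
          refine ⟨⟨ht.1.le, le_trans ht.2.le hbS.1.2⟩, h⟩
        have := csInf_le hSbdd htS
        linarith [ht.2]
    -- monotone on [x0, b]
    have hmono : MonotoneOn G (Set.Icc x0 b) := by
      apply monotoneOn_of_deriv_nonneg (convex_Icc x0 b) hGcont.continuousOn
      · intro t _
        exact (hGderiv t).differentiableAt.differentiableWithinAt
      · intro t ht
        rw [interior_Icc] at ht
        rw [(hGderiv t).deriv]
        have hft : f t = 0 := hf0 t (ne_of_gt (hGgt t ht))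
        rw [hft, sub_zero]
        exact hf_nonneg (t + π)
    have := hmono (Set.mem_Icc.2 ⟨le_refl x0, hx0b.le⟩)
      (Set.mem_Icc.2 ⟨hx0b.le, le_refl b⟩) hx0b.le
    rw [hbG] at this
    linarith
  obtain ⟨x1, hfx1, hGx1⟩ := hx1
  -- open interval around x1
  have hopen : IsOpen {x : ℝ | 0 < f x ∧ G x ≠ 1/2} := by
    have h1 : IsOpen {x : ℝ | 0 < f x} := isOpen_lt continuous_const hf_cont
    have h2 : IsOpen {x : ℝ | G x ≠ 1/2} := by
      have : {x : ℝ | G x ≠ 1/2} = G ⁻¹' ({1/2}ᶜ) := rfl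
      rw [this]
      exact (isClosed_singleton.preimage hGcont).isOpen_compl
    exact h1.inter h2
  obtain ⟨ε, hε, hball⟩ := Metric.isOpen_iff.1 hopen x1 ⟨hfx1, hGx1⟩
  have hIoo : ∀ x ∈ Set.Ioo (x1 - ε) (x1 + ε), 0 < f x ∧ G x ≠ 1/2 := by
    intro x hx
    apply hball
    rw [Metric.mem_ball, Real.dist_eq, abs_sub_lt_iff]
    constructor <;> [linarith [hx.2]; linarith [hx.1]]
  refine ⟨⟨x1 - ε, x1 + ε, by linarith, hIoo⟩, ?_⟩
  -- Part 2
  intro n hn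
  set m := n - 1 with hm_def
  have hm : 2 ≤ m := by omega
  set c : ℝ := 2 * (1/2:ℝ)^m with hc_def
  have hkey_le : ∀ t : ℝ, 0 ≤ t → t ≤ 1 → c ≤ t^m + (1-t)^m := by
    intro t ht0 ht1
    have h := (convexOn_pow m).2 (Set.mem_Ici.2 ht0)
      (Set.mem_Ici.2 (by linarith : (0:ℝ) ≤ 1 - t))
      (le_of_lt one_half_pos) (le_of_lt one_half_pos) (by norm_num)
    simp only [smul_eq_mul] at h
    rw [show (1/2:ℝ) * t + 1/2 * (1-t) = 1/2 by ring] at h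
    rw [hc_def]; linarith
  have hkey_lt : ∀ t : ℝ, 0 ≤ t → t ≤ 1 → t ≠ 1/2 → c < t^m + (1-t)^m := by
    intro t ht0 ht1 hne
    have hne' : t ≠ 1 - t := fun h => hne (by linarith)
    have h := (strictConvexOn_pow hm).2 (Set.mem_Ici.2 ht0)
      (Set.mem_Ici.2 (by linarith : (0:ℝ) ≤ 1 - t)) hne' one_half_pos one_half_pos (by norm_num)
    simp only [smul_eq_mul] at h
    rw [show (1/2:ℝ) * t + 1/2 * (1-t) = 1/2 by ring] at h
    rw [hc_def]; linarith
  have hGsub : ∀ x, G (x - π) = 1 - G x := fun x => by linarith [hsum x]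
  -- move x1 into [0, 2π)
  have hPper : Function.Periodic (fun x => (f x, G x)) (2 * π) := by
    intro x; simp [hf_per x, hGper x]
  obtain ⟨y, hy, hxy⟩ := hPper.exists_mem_Ico₀ (by linarith) x1
  have hfy : f y = f x1 := (congrArg Prod.fst hxy).symm
  have hGy : G y = G x1 := (congrArg Prod.snd hxy).symm
  -- strict integral inequality
  have hcont1 : Continuous fun x => f x * c := by continuity
  have hcont2 : Continuous fun x => f x * (G x ^ m + G (x - π) ^ m) := by
    apply hf_cont.mul
    exact ((hGcont.pow m).add ((hGcont.comp (continuous_id.sub continuous_const)).pow m))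
  have hstrict : (∫ x in (0:ℝ)..(2 * π), f x * c) <
      ∫ x in (0:ℝ)..(2 * π), f x * (G x ^ m + G (x - π) ^ m) := by
    apply intervalIntegral.integral_lt_integral_of_continuousOn_of_le_of_exists_lt
      (by linarith) hcont1.continuousOn hcont2.continuousOn
    · intro x _
      apply mul_le_mul_of_nonneg_left _ (hf_nonneg x)
      rw [hGsub x]
      exact hkey_le (G x) (hGnonneg x) (hGle1 x)
    · refine ⟨y, ⟨hy.1, hy.2.le⟩, ?_⟩
      apply mul_lt_mul_of_pos_left _ (by rw [hfy]; exact hfx1)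
      rw [hGsub y]
      exact hkey_lt (G y) (hGnonneg y) (hGle1 y) (by rw [hGy]; exact hGx1)
  have heval : (∫ x in (0:ℝ)..(2 * π), f x * c) = c := by
    rw [intervalIntegral.integral_mul_const, hf_int, one_mul]
  rw [heval] at hstrict
  have : (1/2:ℝ) * c = (1/2)^m := by
    rw [hc_def]; ring
  calc ((1:ℝ)/2) ^ m = (1/2) * c := this.symm
    _ < (1/2) * ∫ x in (0:ℝ)..(2 * π), f x * (G x ^ m + G (x - π) ^ m) := by linarith
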